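/- Let F̂ be a t-torsion module over a ring R[[t]] (R commutative). Then Hom_{R[[t]]}(F̂, R((t))/R[[t]]) ≅ Hom_R(F̂, R), via sending a compatible family (f_k : F̂ → R·t^{−k})_{k≥1} with f_k ∘ t = t ∘ f_{k+1} to its first component f_1. -/

import Mathlib

open PowerSeries

/-- The image of `R[[t]]` inside the Laurent series `R((t))`, as a submodule over
`R[[t]]`. -/
noncomputable def powerSeriesSub (R : Type) [CommRing R] :
    Submodule (PowerSeries R) (LaurentSeries R) :=
  LinearMap.range (Algebra.linearMap (PowerSeries R) (LaurentSeries R))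

namespace Stmt10Aux

variable {R : Type} [CommRing R]

theorem algMap_eq (p : PowerSeries R) :
    algebraMap (PowerSeries R) (LaurentSeries R) p = HahnSeries.ofPowerSeries ℤ R p := by
  rw [HahnSeries.algebraMap_apply']; simp

theorem ps_smul_eq (p : PowerSeries R) (x : LaurentSeries R) :
    p • x = HahnSeries.ofPowerSeries ℤ R p * x := by
  rw [Algebra.smul_def, algMap_eq]

instance : IsScalarTower R (PowerSeries R) (LaurentSeries R) where
  smul_assoc r p x := by
    rw [ps_smul_eq, ps_smul_eq, PowerSeries.smul_eq_C_mul, map_mul,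
      HahnSeries.ofPowerSeries_C, mul_assoc, HahnSeries.C_mul_eq_smul]

theorem coeff_ofPS_neg (p : PowerSeries R) {i : ℤ} (hi : i < 0) :
    ((HahnSeries.ofPowerSeries ℤ R) p).coeff i = 0 := by
  rw [HahnSeries.ofPowerSeries_apply]
  refine HahnSeries.embDomain_notin_range ?_
  rintro ⟨n, hn⟩
  have : ((n : ℤ)) = i := hn
  omega

theorem mem_iff {x : LaurentSeries R} :
    x ∈ powerSeriesSub R ↔ ∀ i : ℤ, i < 0 → x.coeff i = 0 := by
  constructor
  · rintro ⟨p, rfl⟩ i hi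
    rw [Algebra.linearMap_apply, algMap_eq]
    exact coeff_ofPS_neg p hi
  · intro h
    refine ⟨PowerSeries.mk (fun n => x.coeff (n : ℤ)), ?_⟩
    rw [Algebra.linearMap_apply, algMap_eq]
    ext i
    rcases le_or_gt 0 i with hi | hi
    · obtain ⟨n, rfl⟩ := Int.eq_ofNat_of_zero_le hi
      rw [HahnSeries.ofPowerSeries_apply_coeff]
      simp
    · rw [coeff_ofPS_neg _ hi, h i hi]

/-- coefficient extraction as an `R`-linear map. -/
def coeffHom (i : ℤ) : LaurentSeries R →ₗ[R] R where
  toFun x := x.coeff i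
  map_add' _ _ := HahnSeries.coeff_add
  map_smul' _ _ := HahnSeries.coeff_smul

noncomputable def cbar : (LaurentSeries R ⧸ powerSeriesSub R) →ₗ[R] R :=
  LinearMap.comp
    (Submodule.liftQ ((powerSeriesSub R).restrictScalars R) (coeffHom (-1))
      (fun x hx => mem_iff.mp hx (-1) (by norm_num)))
    (Submodule.Quotient.restrictScalarsEquiv R (powerSeriesSub R)).symm.toLinearMap

theorem cbar_mk (x : LaurentSeries R) :
    cbar (Submodule.Quotient.mk x) = x.coeff (-1) := by
  simp [cbar, Submodule.Quotient.restrictScalarsEquiv_symm_mk, coeffHom]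

variable {F : Type} [AddCommGroup F] [Module R F] [Module (PowerSeries R) F]
    [IsScalarTower R (PowerSeries R) F]

noncomputable def Lser (f : F →ₗ[R] R) (n : ℕ) (m : F) : LaurentSeries R :=
  ∑ k ∈ Finset.range n, HahnSeries.single (-(k + 1) : ℤ) (f ((X ^ k : PowerSeries R) • m))

theorem Lser_coeff_neg (f : F →ₗ[R] R) (n : ℕ) (m : F) (j : ℕ) :
    (Lser f n m).coeff (-(j + 1) : ℤ) =
      if j < n then f ((X ^ j : PowerSeries R) • m) else 0 := by
  have h0 : (Lser f n m).coeff (-(j + 1) : ℤ) = coeffHom (-(j + 1) : ℤ) (Lser f n m) := rfl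
  rw [h0, Lser, map_sum]
  have h : ∀ k ∈ Finset.range n,
      coeffHom (R := R) (-(j + 1) : ℤ) (HahnSeries.single (-(k + 1) : ℤ)
        (f ((X ^ k : PowerSeries R) • m))) =
      if k = j then f ((X ^ k : PowerSeries R) • m) else 0 := by
    intro k _
    simp only [coeffHom, LinearMap.coe_mk, AddHom.coe_mk, HahnSeries.coeff_single]
    by_cases hkj : k = j
    · subst hkj; simp
    · rw [if_neg (by omega), if_neg hkj]
  rw [Finset.sum_congr rfl h, Finset.sum_ite_eq' (Finset.range n)]
  simp [Finset.mem_range]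

theorem Lser_coeff_nonneg (f : F →ₗ[R] R) (n : ℕ) (m : F) {i : ℤ} (hi : 0 ≤ i) :
    (Lser f n m).coeff i = 0 := by
  have h0 : (Lser f n m).coeff i = coeffHom i (Lser f n m) := rfl
  rw [h0, Lser, map_sum]
  refine Finset.sum_eq_zero fun k _ => ?_
  simp only [coeffHom, LinearMap.coe_mk, AddHom.coe_mk, HahnSeries.coeff_single]
  rw [if_neg (by omega)]

theorem Lser_stable (f : F →ₗ[R] R) {n N : ℕ} {m : F}
    (hn : (X ^ n : PowerSeries R) • m = 0) (hnN : n ≤ N) :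
    Lser f N m = Lser f n m := by
  refine (Finset.sum_subset (Finset.range_subset_range.mpr hnN) fun k _ hk => ?_).symm
  have hk' : n ≤ k := by simpa [Finset.mem_range, not_lt] using hk
  have : (X ^ k : PowerSeries R) • m = 0 := by
    rw [show k = (k - n) + n by omega, pow_add, mul_smul, hn, smul_zero]
  rw [this, map_zero, HahnSeries.single_eq_zero]

theorem Lser_add (f : F →ₗ[R] R) (n : ℕ) (m m' : F) :
    Lser f n (m + m') = Lser f n m + Lser f n m' := by
  unfold Lser
  rw [← Finset.sum_add_distrib]
  refine Finset.sum_congr rfl fun k _ => ?_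
  rw [smul_add, map_add]
  ext i
  simp only [HahnSeries.coeff_single, HahnSeries.coeff_add]
  split <;> simp

theorem smul_eq_sum (p : PowerSeries R) {n : ℕ} {m : F}
    (hn : (X ^ n : PowerSeries R) • m = 0) :
    p • m = ∑ i ∈ Finset.range n,
      (PowerSeries.coeff i p) • ((X ^ i : PowerSeries R) • m) := by
  set s : PowerSeries R := ∑ i ∈ Finset.range n, PowerSeries.C (PowerSeries.coeff i p) * X ^ i
    with hs
  obtain ⟨q, hq⟩ : (X ^ n : PowerSeries R) ∣ (p - s) := by
    rw [PowerSeries.X_pow_dvd_iff]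
    intro d hd
    rw [map_sub, hs]
    rw [map_sum]
    rw [Finset.sum_congr rfl fun i _ => PowerSeries.coeff_C_mul_X_pow _ _ _]
    rw [Finset.sum_ite_eq (Finset.range n)]
    simp [Finset.mem_range.mpr hd]
  have hp : p = s + X ^ n * q := by rw [← hq]; ring
  have h2 : (X ^ n * q : PowerSeries R) • m = 0 := by
    rw [mul_comm, mul_smul, hn, smul_zero]
  have hps : p • m = s • m := by
    conv_lhs => rw [hp]
    rw [add_smul, h2, add_zero]
  rw [hps, hs, Finset.sum_smul]
  refine Finset.sum_congr rfl fun i _ => ?_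
  rw [mul_smul]
  have : PowerSeries.C (PowerSeries.coeff i p) =
      algebraMap R (PowerSeries R) (PowerSeries.coeff i p) := by
    rw [PowerSeries.algebraMap_apply, Algebra.algebraMap_self_apply]
  rw [this, algebraMap_smul]

theorem key_coeff (f : F →ₗ[R] R) (p : PowerSeries R) {n : ℕ} {m : F}
    (hn : (X ^ n : PowerSeries R) • m = 0) (j : ℕ) :
    (HahnSeries.ofPowerSeries ℤ R p * Lser f n m).coeff (-(j + 1) : ℤ) =
      (Lser f n (p • m)).coeff (-(j + 1) : ℤ) := by
  -- common value
  have hXjm : ∀ k : ℕ, n ≤ k → (X ^ k : PowerSeries R) • m = 0 := fun k hk => by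
    rw [show k = (k - n) + n by omega, pow_add, mul_smul, hn, smul_zero]
  -- LHS
  have hL : (HahnSeries.ofPowerSeries ℤ R p * Lser f n m).coeff (-(j + 1) : ℤ) =
      ∑ k ∈ Finset.range n,
        (if j ≤ k then f ((X ^ k : PowerSeries R) • m) * PowerSeries.coeff (k - j) p
         else 0) := by
    rw [Lser, Finset.mul_sum]
    have h0 : (∑ k ∈ Finset.range n, HahnSeries.ofPowerSeries ℤ R p *
        HahnSeries.single (-(k + 1) : ℤ) (f ((X ^ k : PowerSeries R) • m))).coeff
        (-(j + 1) : ℤ) =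
        coeffHom (-(j + 1) : ℤ) (∑ k ∈ Finset.range n, HahnSeries.ofPowerSeries ℤ R p *
        HahnSeries.single (-(k + 1) : ℤ) (f ((X ^ k : PowerSeries R) • m))) := rfl
    rw [h0, map_sum]
    refine Finset.sum_congr rfl fun k _ => ?_
    have hcomm : HahnSeries.ofPowerSeries ℤ R p *
        HahnSeries.single (-(k + 1) : ℤ) (f ((X ^ k : PowerSeries R) • m)) =
        HahnSeries.single (-(k + 1) : ℤ) (f ((X ^ k : PowerSeries R) • m)) *
        HahnSeries.ofPowerSeries ℤ R p := mul_comm _ _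
    have hsingle := HahnSeries.coeff_single_mul_add (r := f ((X ^ k : PowerSeries R) • m))
      (x := HahnSeries.ofPowerSeries ℤ R p) (a := ((k : ℤ) - j)) (b := (-(k + 1) : ℤ))
    have hab : ((k : ℤ) - j) + (-(k + 1) : ℤ) = -(j + 1) := by ring
    rw [hab] at hsingle
    show coeffHom (-(j+1) : ℤ) _ = _
    simp only [coeffHom, LinearMap.coe_mk, AddHom.coe_mk]
    rw [hcomm, hsingle]
    by_cases hjk : j ≤ k
    · rw [if_pos hjk]
      have : ((k : ℤ) - j) = ((k - j : ℕ) : ℤ) := by omega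
      rw [this, HahnSeries.ofPowerSeries_apply_coeff]
    · rw [if_neg hjk, coeff_ofPS_neg p (by omega), mul_zero]
  -- RHS
  have hnpm : (X ^ n : PowerSeries R) • (p • m) = 0 := by
    rw [smul_comm, hn, smul_zero]
  have hR : (Lser f n (p • m)).coeff (-(j + 1) : ℤ) =
      if j < n then f ((X ^ j : PowerSeries R) • (p • m)) else 0 :=
    Lser_coeff_neg f n (p • m) j
  rw [hL, hR]
  -- compute the common value
  have hmain : f ((X ^ j : PowerSeries R) • (p • m)) =
      ∑ i ∈ Finset.range n, PowerSeries.coeff i p * f ((X ^ (i + j) : PowerSeries R) • m) := by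
    have h1 : (X ^ j : PowerSeries R) • (p • m) = p • ((X ^ j : PowerSeries R) • m) :=
      smul_comm _ _ _
    have h2 : (X ^ n : PowerSeries R) • ((X ^ j : PowerSeries R) • m) = 0 := by
      rw [smul_comm, hn, smul_zero]
    rw [h1, smul_eq_sum p h2, map_sum]
    refine Finset.sum_congr rfl fun i _ => ?_
    rw [map_smul, smul_eq_mul, ← mul_smul, ← pow_add]
  -- turn LHS sum into the same shape
  have hLHS : (∑ k ∈ Finset.range n,
        (if j ≤ k then f ((X ^ k : PowerSeries R) • m) * PowerSeries.coeff (k - j) p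
         else 0)) =
      ∑ i ∈ Finset.range n, PowerSeries.coeff i p * f ((X ^ (i + j) : PowerSeries R) • m) := by
    have hext : (∑ k ∈ Finset.range n,
        (if j ≤ k then f ((X ^ k : PowerSeries R) • m) * PowerSeries.coeff (k - j) p
         else 0)) =
        ∑ k ∈ Finset.range (j + n),
        (if j ≤ k then f ((X ^ k : PowerSeries R) • m) * PowerSeries.coeff (k - j) p
         else 0) := by
      refine Finset.sum_subset (Finset.range_subset_range.mpr (by omega)) fun k _ hk => ?_
      have hk' : n ≤ k := by simpa [Finset.mem_range, not_lt] using hk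
      rw [hXjm k hk', map_zero, zero_mul, ite_self]
    rw [hext, Finset.sum_range_add]
    have hz : (∑ k ∈ Finset.range j,
        (if j ≤ k then f ((X ^ k : PowerSeries R) • m) * PowerSeries.coeff (k - j) p
         else 0)) = 0 :=
      Finset.sum_eq_zero fun k hk => by
        rw [if_neg (by have := Finset.mem_range.mp hk; omega)]
    rw [hz, zero_add]
    refine Finset.sum_congr rfl fun i _ => ?_
    rw [if_pos (by omega), show j + i - j = i by omega, add_comm i j, mul_comm]
  rw [hLHS]
  by_cases hjn : j < n
  · rw [if_pos hjn, hmain]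
  · rw [if_neg hjn]
    exact Finset.sum_eq_zero fun i _ => by
      rw [hXjm (i + j) (by omega), map_zero, mul_zero]

theorem tors_mono {m : F} {a b : ℕ} (ha : (X ^ a : PowerSeries R) • m = 0) (hab : a ≤ b) :
    (X ^ b : PowerSeries R) • m = 0 := by
  rw [show b = (b - a) + a by omega, pow_add, mul_smul, ha, smul_zero]

theorem key_mem (f : F →ₗ[R] R) (p : PowerSeries R) {n : ℕ} {m : F}
    (hn : (X ^ n : PowerSeries R) • m = 0) :
    HahnSeries.ofPowerSeries ℤ R p * Lser f n m - Lser f n (p • m) ∈ powerSeriesSub R := by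
  rw [mem_iff]
  intro i hi
  obtain ⟨j, rfl⟩ : ∃ j : ℕ, i = -((j : ℤ) + 1) := ⟨(-i - 1).toNat, by omega⟩
  rw [HahnSeries.coeff_sub, key_coeff f p hn j, sub_self]

end Stmt10Aux

open Stmt10Aux in
/-- For a `t`-torsion module `F̂` over `R[[t]]`,
`Hom_{R[[t]]}(F̂, R((t))/R[[t]]) ≅ Hom_R(F̂, R)`, via sending a homomorphism `φ`
to its first component `f_1 : m ↦ (coefficient of t⁻¹ of φ(m))`. -/
theorem stmt_10 (R : Type) [CommRing R]
    (F : Type) [AddCommGroup F] [Module R F] [Module (PowerSeries R) F]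
    [IsScalarTower R (PowerSeries R) F]
    (htors : ∀ m : F, ∃ n : ℕ, (X ^ n : PowerSeries R) • m = 0) :
    ∃ e : (F →ₗ[PowerSeries R] (LaurentSeries R ⧸ powerSeriesSub R)) ≃+ (F →ₗ[R] R),
      ∀ (φ : F →ₗ[PowerSeries R] (LaurentSeries R ⧸ powerSeriesSub R)) (m : F)
        (x : LaurentSeries R), Submodule.Quotient.mk x = φ m →
          (e φ) m = x.coeff (-1 : ℤ) := by
  
  classical
  set Q := LaurentSeries R ⧸ powerSeriesSub R with hQ
  set E : (F →ₗ[PowerSeries R] Q) →+ (F →ₗ[R] R) :=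
    { toFun := fun φ => cbar ∘ₗ (φ.restrictScalars R)
      map_zero' := by ext m; simp
      map_add' := by intro φ ψ; ext m; simp } with hE
  have hEapp : ∀ (φ : F →ₗ[PowerSeries R] Q) (m : F), E φ m = cbar (φ m) := fun _ _ => rfl
  -- injectivity
  have hinj : Function.Injective E := by
    rw [injective_iff_map_eq_zero]
    intro φ hφ
    ext m
    obtain ⟨x, hx⟩ := Submodule.Quotient.mk_surjective _ (φ m)
    rw [LinearMap.zero_apply, ← hx, Submodule.Quotient.mk_eq_zero, mem_iff]
    intro i hi
    obtain ⟨j, rfl⟩ : ∃ j : ℕ, i = -((j : ℤ) + 1) := ⟨(-i - 1).toNat, by omega⟩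
    have h1 : ((X ^ j : PowerSeries R) • x).coeff (-1) = x.coeff (-((j : ℤ) + 1)) := by
      rw [ps_smul_eq, HahnSeries.ofPowerSeries_X_pow]
      have hs := HahnSeries.coeff_single_mul_add (r := (1 : R)) (x := x)
        (a := (-((j : ℤ) + 1))) (b := (j : ℤ))
      have hab : (-((j : ℤ) + 1)) + (j : ℤ) = -1 := by ring
      rw [hab] at hs
      rw [hs, one_mul]
    have h2 : cbar (φ ((X ^ j : PowerSeries R) • m)) = 0 := by
      have := DFunLike.congr_fun hφ ((X ^ j : PowerSeries R) • m)
      rw [hEapp] at this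
      simpa using this
    calc x.coeff (-((j : ℤ) + 1)) = ((X ^ j : PowerSeries R) • x).coeff (-1) := h1.symm
      _ = cbar (Submodule.Quotient.mk ((X ^ j : PowerSeries R) • x)) := (cbar_mk _).symm
      _ = cbar ((X ^ j : PowerSeries R) • (Submodule.Quotient.mk x : Q)) := by
          rw [Submodule.Quotient.mk_smul]
      _ = cbar (φ ((X ^ j : PowerSeries R) • m)) := by rw [hx, ← map_smul]
      _ = 0 := h2
  -- surjectivity
  have hsurj : Function.Surjective E := by
    intro f
    have hbound : ∀ m : F, (X ^ (Classical.choose (htors m)) : PowerSeries R) • m = 0 :=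
      fun m => Classical.choose_spec (htors m)
    set L : F → LaurentSeries R := fun m => Lser f (Classical.choose (htors m)) m with hL
    have hLeq : ∀ (m : F) (n : ℕ), (X ^ n : PowerSeries R) • m = 0 → L m = Lser f n m := by
      intro m n hn
      have h1 := Lser_stable f hn (le_max_left n (Classical.choose (htors m)))
      have h2 := Lser_stable f (hbound m) (le_max_right n (Classical.choose (htors m)))
      rw [show L m = Lser f (Classical.choose (htors m)) m from rfl, ← h2, h1]
    set φ : F →ₗ[PowerSeries R] Q :=
      { toFun := fun m => Submodule.Quotient.mk (L m)
        map_add' := fun m m' => by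
          set n := max (Classical.choose (htors m)) (Classical.choose (htors m')) with hn
          have hm : (X ^ n : PowerSeries R) • m = 0 :=
            tors_mono (hbound m) (le_max_left _ _)
          have hm' : (X ^ n : PowerSeries R) • m' = 0 :=
            tors_mono (hbound m') (le_max_right _ _)
          have hsum : (X ^ n : PowerSeries R) • (m + m') = 0 := by
            rw [smul_add, hm, hm', add_zero]
          show (Submodule.Quotient.mk (L (m + m')) : Q) =
            Submodule.Quotient.mk (L m) + Submodule.Quotient.mk (L m')
          rw [hLeq (m + m') n hsum, hLeq m n hm, hLeq m' n hm', Lser_add,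
            Submodule.Quotient.mk_add]
        map_smul' := fun p m => by
          set n := Classical.choose (htors m) with hn
          have hm := hbound m
          have hpm : (X ^ n : PowerSeries R) • (p • m) = 0 := by
            rw [smul_comm, hm, smul_zero]
          show (Submodule.Quotient.mk (L (p • m)) : Q) = p • Submodule.Quotient.mk (L m)
          rw [hLeq (p • m) n hpm, hLeq m n hm, ← Submodule.Quotient.mk_smul,
            Submodule.Quotient.eq]
          have := (powerSeriesSub R).neg_mem (key_mem f p hm)
          rw [neg_sub] at this
          rw [ps_smul_eq]
          exact this } with hφ
    refine ⟨φ, ?_⟩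
    ext m
    have hφm : φ m = Submodule.Quotient.mk (L m) := rfl
    rw [hEapp, hφm, cbar_mk]
    set c := Classical.choose (htors m) with hc
    have hc1 : (X ^ (c + 1) : PowerSeries R) • m = 0 := tors_mono (hbound m) (by omega)
    rw [hLeq m (c + 1) hc1]
    have := Lser_coeff_neg f (c + 1) m 0
    simp only [Nat.cast_zero, zero_add, pow_zero, one_smul, Nat.lt_irrefl] at this
    rw [show (-1 : ℤ) = -(0 + 1) by ring] at this ⊢
    rw [this, if_pos (by omega)]
  refine ⟨AddEquiv.ofBijective E ⟨hinj, hsurj⟩, ?_⟩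
  intro φ m x hmk
  have : (AddEquiv.ofBijective E ⟨hinj, hsurj⟩) φ = E φ := rfl
  rw [this, hEapp, ← hmk, cbar_mk]
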